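/- Let n ≥ 2, let Ω ⊆ ℝⁿ be open, and let a : (0,∞) → (0,∞) be continuously differentiable. Then for every u ∈ C³(Ω) and every x ∈ Ω with ∇u(x) ≠ 0, the following pointwise identity holds at x: (div(a(|∇u|)∇u))² = Σ_{j=1}^n ∂_{x_j}( a(|∇u|)² u_{x_j} Δu ) − Σ_{i,j=1}^n ∂_{x_i}( a(|∇u|)² u_{x_j} u_{x_i x_j} ) + 2 a(|∇u|) a'(|∇u|) Σ_{i,j=1}^n (|∇u|)_{x_i} u_{x_j} u_{x_i x_j} + a(|∇u|)² |∇²u|² + a'(|∇u|)² ( ∇|∇u| · ∇u )². -/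

import Mathlib

noncomputable section

open Finset

/-- The `i`-th standard basis vector of `ℝⁿ`. -/
def stdBasis (n : ℕ) (i : Fin n) : EuclideanSpace ℝ (Fin n) :=
  EuclideanSpace.single i 1

/-- The `i`-th partial derivative of `f` at `x`. -/
def pd {n : ℕ} (f : EuclideanSpace ℝ (Fin n) → ℝ) (i : Fin n)
    (x : EuclideanSpace ℝ (Fin n)) : ℝ :=
  fderiv ℝ f x (stdBasis n i)

/-- The Euclidean norm of the gradient of `u` at `x`. -/
def gradNorm {n : ℕ} (u : EuclideanSpace ℝ (Fin n) → ℝ)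
    (x : EuclideanSpace ℝ (Fin n)) : ℝ :=
  Real.sqrt (∑ j, (pd u j x) ^ 2)

/-- The `(i,j)` entry `u_{x_i x_j}` of the Hessian of `u` at `x`. -/
def hess {n : ℕ} (u : EuclideanSpace ℝ (Fin n) → ℝ) (i j : Fin n)
    (x : EuclideanSpace ℝ (Fin n)) : ℝ :=
  pd (pd u j) i x

/-- The Laplacian of `u` at `x`. -/
def lap {n : ℕ} (u : EuclideanSpace ℝ (Fin n) → ℝ)
    (x : EuclideanSpace ℝ (Fin n)) : ℝ :=
  ∑ i, hess u i i x

section AuxLemmas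

variable {n : ℕ}

lemma pd_congr {f g : EuclideanSpace ℝ (Fin n) → ℝ} {x : EuclideanSpace ℝ (Fin n)}
    (h : f =ᶠ[nhds x] g) (i : Fin n) : pd f i x = pd g i x := by
  unfold pd; rw [h.fderiv_eq]

lemma pd_mul {f g : EuclideanSpace ℝ (Fin n) → ℝ} {x : EuclideanSpace ℝ (Fin n)}
    (hf : DifferentiableAt ℝ f x) (hg : DifferentiableAt ℝ g x) (i : Fin n) :
    pd (fun y => f y * g y) i x = pd f i x * g x + f x * pd g i x := by
  unfold pd
  rw [fderiv_fun_mul hf hg]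
  simp only [ContinuousLinearMap.add_apply, ContinuousLinearMap.coe_smul', Pi.smul_apply,
    smul_eq_mul]
  ring

lemma pd_sum {ι : Type*} {s : Finset ι} {f : ι → EuclideanSpace ℝ (Fin n) → ℝ}
    {x : EuclideanSpace ℝ (Fin n)} (h : ∀ i ∈ s, DifferentiableAt ℝ (f i) x) (j : Fin n) :
    pd (fun y => ∑ i ∈ s, f i y) j x = ∑ i ∈ s, pd (f i) j x := by
  unfold pd
  rw [fderiv_fun_sum h]
  simp

lemma pd_comp {g : EuclideanSpace ℝ (Fin n) → ℝ} {a : ℝ → ℝ} {x : EuclideanSpace ℝ (Fin n)}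
    (hg : DifferentiableAt ℝ g x) (ha : DifferentiableAt ℝ a (g x)) (i : Fin n) :
    pd (fun y => a (g y)) i x = deriv a (g x) * pd g i x := by
  unfold pd
  rw [show (fun y => a (g y)) = a ∘ g from rfl, fderiv_comp x ha hg]
  simp only [ContinuousLinearMap.coe_comp', Function.comp_apply]
  generalize (fderiv ℝ g x) (stdBasis n i) = t
  have h1 : fderiv ℝ a (g x) t = t * fderiv ℝ a (g x) 1 := by
    conv_lhs => rw [show t = t • (1:ℝ) by simp]
    rw [map_smul, smul_eq_mul]
  rw [h1, fderiv_apply_one_eq_deriv]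
  ring

lemma contDiffAt_pd {f : EuclideanSpace ℝ (Fin n) → ℝ} {x : EuclideanSpace ℝ (Fin n)}
    {m k : WithTop ℕ∞} (hf : ContDiffAt ℝ k f x) (h : m + 1 ≤ k) (j : Fin n) :
    ContDiffAt ℝ m (pd f j) x :=
  (hf.fderiv_right h).clm_apply contDiffAt_const

lemma hess_eq_sndFDeriv {f : EuclideanSpace ℝ (Fin n) → ℝ} {y : EuclideanSpace ℝ (Fin n)}
    (hdf : DifferentiableAt ℝ (fderiv ℝ f) y) (p q : Fin n) :
    hess f p q y = fderiv ℝ (fderiv ℝ f) y (stdBasis n p) (stdBasis n q) := by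
  have h := fderiv_clm_apply (c := fderiv ℝ f) (u := fun _ => stdBasis n q) hdf
    (differentiableAt_const _)
  simp only [fderiv_fun_const, Pi.zero_apply, ContinuousLinearMap.comp_zero, zero_add] at h
  show fderiv ℝ (fun z => fderiv ℝ f z (stdBasis n q)) y (stdBasis n p) = _
  rw [h]
  rfl

lemma hess_symm_at {f : EuclideanSpace ℝ (Fin n) → ℝ} {y : EuclideanSpace ℝ (Fin n)}
    (hf : ContDiffAt ℝ 2 f y) (p q : Fin n) : hess f p q y = hess f q p y := by
  have hdf : DifferentiableAt ℝ (fderiv ℝ f) y :=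
    (hf.fderiv_right (m := 1) (by norm_num)).differentiableAt one_ne_zero
  rw [hess_eq_sndFDeriv hdf, hess_eq_sndFDeriv hdf]
  exact hf.isSymmSndFDerivAt (by simp) _ _

end AuxLemmas

/-- The pointwise identity
`(div(a(|∇u|)∇u))² = ∑ⱼ ∂ⱼ(a(|∇u|)² u_{xⱼ} Δu) − ∑ᵢⱼ ∂ᵢ(a(|∇u|)² u_{xⱼ} u_{xᵢxⱼ})
  + 2 a a' ∑ᵢⱼ (|∇u|)_{xᵢ} u_{xⱼ} u_{xᵢxⱼ} + a² |∇²u|² + a'² (∇|∇u| ⬝ ∇u)²`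
at points where `∇u ≠ 0`. -/
theorem pointwise_identity
    (n : ℕ) (hn : 2 ≤ n)
    (a : ℝ → ℝ) (ha : ContDiffOn ℝ 1 a (Set.Ioi 0)) (hapos : ∀ t : ℝ, 0 < t → 0 < a t)
    (Ω : Set (EuclideanSpace ℝ (Fin n))) (hΩ : IsOpen Ω)
    (u : EuclideanSpace ℝ (Fin n) → ℝ) (hu : ContDiffOn ℝ 3 u Ω)
    (x : EuclideanSpace ℝ (Fin n)) (hx : x ∈ Ω) (hgrad : (fun j => pd u j x) ≠ 0) :
    (∑ j, pd (fun y => a (gradNorm u y) * pd u j y) j x) ^ 2 =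
      (∑ j, pd (fun y => (a (gradNorm u y)) ^ 2 * pd u j y * lap u y) j x)
      - (∑ i, ∑ j, pd (fun y => (a (gradNorm u y)) ^ 2 * pd u j y * hess u i j y) i x)
      + 2 * a (gradNorm u x) * deriv a (gradNorm u x)
          * ∑ i, ∑ j, pd (gradNorm u) i x * pd u j x * hess u i j x
      + (a (gradNorm u x)) ^ 2 * (∑ i, ∑ j, (hess u i j x) ^ 2)
      + (deriv a (gradNorm u x)) ^ 2 * (∑ i, pd (gradNorm u) i x * pd u i x) ^ 2 := by
  have hΩx : Ω ∈ nhds x := hΩ.mem_nhds hx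
  have hu3 : ∀ y ∈ Ω, ContDiffAt ℝ 3 u y := fun y hy => hu.contDiffAt (hΩ.mem_nhds hy)
  have hpdu2 : ∀ (j : Fin n), ∀ y ∈ Ω, ContDiffAt ℝ 2 (pd u j) y := fun j y hy =>
    contDiffAt_pd (hu3 y hy) (by norm_num) j
  have hpdux : ∀ j, DifferentiableAt ℝ (pd u j) x := fun j =>
    (hpdu2 j x hx).differentiableAt two_ne_zero
  have hhessC : ∀ i j, ∀ y ∈ Ω, ContDiffAt ℝ 1 (hess u i j) y := fun i j y hy =>
    contDiffAt_pd (hpdu2 j y hy) (by norm_num) i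
  have hhessx : ∀ i j, DifferentiableAt ℝ (hess u i j) x := fun i j =>
    (hhessC i j x hx).differentiableAt one_ne_zero
  have hlapx : DifferentiableAt ℝ (lap u) x := by
    have : DifferentiableAt ℝ (fun y => ∑ i, hess u i i y) x :=
      DifferentiableAt.fun_sum (fun i _ => hhessx i i)
    exact this
  -- positivity of the gradient norm
  obtain ⟨j₀, hj₀⟩ : ∃ j, pd u j x ≠ 0 := by
    by_contra h
    push_neg at h
    exact hgrad (funext fun j => h j)
  have hspos : 0 < ∑ j, pd u j x ^ 2 :=
    Finset.sum_pos' (fun j _ => sq_nonneg _) ⟨j₀, Finset.mem_univ _, by positivity⟩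
  have hsC : ContDiffAt ℝ 1 (fun y => ∑ j, pd u j y ^ 2) x :=
    ContDiffAt.sum (fun j _ => ((hpdu2 j x hx).of_le one_le_two).pow 2)
  have hgC : ContDiffAt ℝ 1 (gradNorm u) x := by
    have : ContDiffAt ℝ 1 (fun y => Real.sqrt (∑ j, pd u j y ^ 2)) x :=
      (Real.contDiffAt_sqrt (ne_of_gt hspos)).comp x hsC
    exact this
  have hgx : DifferentiableAt ℝ (gradNorm u) x := hgC.differentiableAt one_ne_zero
  have hgpos : 0 < gradNorm u x := Real.sqrt_pos.mpr hspos
  have hax : DifferentiableAt ℝ a (gradNorm u x) :=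
    (ha.contDiffAt (isOpen_Ioi.mem_nhds hgpos)).differentiableAt one_ne_zero
  have hA : DifferentiableAt ℝ (fun y => a (gradNorm u y)) x := hax.comp x hgx
  have hA2 : DifferentiableAt ℝ (fun y => a (gradNorm u y) ^ 2) x := hA.pow 2
  -- chain rule values
  have hpdA : ∀ i, pd (fun y => a (gradNorm u y)) i x
      = deriv a (gradNorm u x) * pd (gradNorm u) i x := fun i => pd_comp hgx hax i
  have hpdA2 : ∀ i, pd (fun y => a (gradNorm u y) ^ 2) i x
      = 2 * a (gradNorm u x) * deriv a (gradNorm u x) * pd (gradNorm u) i x := by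
    intro i
    have h := pd_comp (a := fun t => a t ^ 2) hgx (hax.pow 2) i
    have hd : deriv (fun t => a t ^ 2) (gradNorm u x)
        = 2 * a (gradNorm u x) * deriv a (gradNorm u x) := by
      have h2 := (hax.hasDerivAt.fun_pow 2).deriv
      simpa using h2
    rw [h, hd]
  -- summand expansions
  have eL : ∀ j, pd (fun y => a (gradNorm u y) * pd u j y) j x
      = deriv a (gradNorm u x) * (pd (gradNorm u) j x * pd u j x)
        + a (gradNorm u x) * hess u j j x := by
    intro j
    have h := pd_mul hA (hpdux j) j
    rw [h, hpdA j]
    simp only [hess]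
    ring
  have eT1 : ∀ j, pd (fun y => a (gradNorm u y) ^ 2 * pd u j y * lap u y) j x
      = (2 * a (gradNorm u x) * deriv a (gradNorm u x) * lap u x)
          * (pd (gradNorm u) j x * pd u j x)
        + (a (gradNorm u x) ^ 2 * lap u x) * hess u j j x
        + a (gradNorm u x) ^ 2 * (pd u j x * pd (lap u) j x) := by
    intro j
    have h1 := pd_mul (f := fun y => a (gradNorm u y) ^ 2 * pd u j y) (g := lap u)
      (hA2.mul (hpdux j)) hlapx j
    have h2 := pd_mul (f := fun y => a (gradNorm u y) ^ 2) (g := pd u j) hA2 (hpdux j) j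
    rw [h1, h2, hpdA2 j]
    simp only [hess]
    ring
  have eT2 : ∀ i j, pd (fun y => a (gradNorm u y) ^ 2 * pd u j y * hess u i j y) i x
      = (2 * a (gradNorm u x) * deriv a (gradNorm u x))
          * (pd (gradNorm u) i x * pd u j x * hess u i j x)
        + a (gradNorm u x) ^ 2 * (hess u i j x) ^ 2
        + a (gradNorm u x) ^ 2 * (pd u j x * pd (hess u i j) i x) := by
    intro i j
    have h1 := pd_mul (f := fun y => a (gradNorm u y) ^ 2 * pd u j y) (g := hess u i j)
      (hA2.mul (hpdux j)) (hhessx i j) i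
    have h2 := pd_mul (f := fun y => a (gradNorm u y) ^ 2) (g := pd u j) hA2 (hpdux j) i
    rw [h1, h2, hpdA2 i]
    simp only [hess]
    ring
  -- symmetry of second derivatives on Ω
  have hsym2 : ∀ y ∈ Ω, ∀ p q, hess u p q y = hess u q p y := fun y hy p q =>
    hess_symm_at ((hu3 y hy).of_le (by norm_num)) p q
  -- third-derivative symmetry at x
  have hsymm3 : ∀ i j : Fin n, pd (hess u i i) j x = pd (hess u i j) i x := by
    intro i j
    have hv2 : ContDiffAt ℝ 2 (pd u i) x := hpdu2 i x hx
    have h1 : pd (hess u i i) j x = hess (pd u i) j i x := rfl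
    have h2 : hess (pd u i) j i x = hess (pd u i) i j x := hess_symm_at hv2 j i
    have h3 : hess (pd u i) i j x = pd (hess u j i) i x := rfl
    have h4 : pd (hess u j i) i x = pd (hess u i j) i x := by
      refine pd_congr ?_ i
      filter_upwards [hΩx] with y hy
      exact hsym2 y hy j i
    rw [h1, h2, h3, h4]
  -- the three sum computations
  have e1 : (∑ j, pd (fun y => a (gradNorm u y) * pd u j y) j x)
      = deriv a (gradNorm u x) * (∑ i, pd (gradNorm u) i x * pd u i x)
        + a (gradNorm u x) * lap u x := by
    rw [Finset.sum_congr rfl (fun j _ => eL j), Finset.sum_add_distrib,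
      ← Finset.mul_sum, ← Finset.mul_sum]
    rfl
  have e2 : (∑ j, pd (fun y => a (gradNorm u y) ^ 2 * pd u j y * lap u y) j x)
      = (2 * a (gradNorm u x) * deriv a (gradNorm u x) * lap u x)
          * (∑ i, pd (gradNorm u) i x * pd u i x)
        + (a (gradNorm u x) ^ 2 * lap u x) * lap u x
        + a (gradNorm u x) ^ 2 * (∑ j, pd u j x * pd (lap u) j x) := by
    rw [Finset.sum_congr rfl (fun j _ => eT1 j), Finset.sum_add_distrib, Finset.sum_add_distrib,
      ← Finset.mul_sum, ← Finset.mul_sum, ← Finset.mul_sum]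
    rfl
  have e3 : (∑ i, ∑ j, pd (fun y => a (gradNorm u y) ^ 2 * pd u j y * hess u i j y) i x)
      = (2 * a (gradNorm u x) * deriv a (gradNorm u x))
          * (∑ i, ∑ j, pd (gradNorm u) i x * pd u j x * hess u i j x)
        + a (gradNorm u x) ^ 2 * (∑ i, ∑ j, (hess u i j x) ^ 2)
        + a (gradNorm u x) ^ 2 * (∑ i, ∑ j, pd u j x * pd (hess u i j) i x) := by
    rw [Finset.sum_congr rfl (fun i _ => Finset.sum_congr rfl (fun j _ => eT2 i j))]
    simp only [Finset.sum_add_distrib, ← Finset.mul_sum]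
  -- third-derivative cancellation
  have e4 : (∑ j, pd u j x * pd (lap u) j x)
      = ∑ i, ∑ j, pd u j x * pd (hess u i j) i x := by
    have hpdlap : ∀ j : Fin n, pd (lap u) j x = ∑ i, pd (hess u i i) j x := fun j =>
      pd_sum (fun i _ => hhessx i i) j
    calc (∑ j, pd u j x * pd (lap u) j x)
        = ∑ j, ∑ i, pd u j x * pd (hess u i i) j x := by
          refine Finset.sum_congr rfl fun j _ => ?_
          rw [hpdlap j, Finset.mul_sum]
      _ = ∑ j, ∑ i, pd u j x * pd (hess u i j) i x := by
          refine Finset.sum_congr rfl fun j _ => Finset.sum_congr rfl fun i _ => ?_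
          rw [hsymm3 i j]
      _ = ∑ i, ∑ j, pd u j x * pd (hess u i j) i x := Finset.sum_comm
  rw [e1, e2, e3, e4]
  ring
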